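/- Let G be a finite group acting by homeomorphisms on a locally connected space B with upper ramification set K negligible, and b : B → A the quotient map (open, continuous, surjective, with fibers the G-orbits). Suppose distinct points in any G-orbit can be separated by open sets. Let Y be a non-empty connected locally connected space and α, β : Y → B diffuse continuous maps with b ∘ α = b ∘ β. Then there exists g ∈ G with g·α(y) = β(y) for all y ∈ Y. -/
import Mathlib


open Set Topology

/-- An open subset `U` is Z-dense if it meets every non-empty open connected set
in a non-empty connected set. -/
def IsZDense {X : Type*} [TopologicalSpace X] (U : Set X) : Prop :=
  IsOpen U ∧ ∀ C : Set X, IsOpen C → IsConnected C → IsConnected (U ∩ C)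

/-- A subset is negligible if its complement is Z-dense. -/
def IsNegligible {X : Type*} [TopologicalSpace X] (I : Set X) : Prop :=
  IsZDense Iᶜ

/-- A negligible subset element `(U, I)`: `U` open, `I ⊆ U`, the subspace `U`
locally connected, and `I` negligible in the subspace `U`. -/
def NegligibleElem {Y : Type*} [TopologicalSpace Y] (U I : Set Y) : Prop :=
  IsOpen U ∧ I ⊆ U ∧ LocallyConnectedSpace ↥U ∧
    IsNegligible ((Subtype.val ⁻¹' I : Set ↥U))

/-- A continuous function is diffuse if it pulls back negligible subset elements
to negligible subset elements. -/
def Diffuse {X Y : Type*} [TopologicalSpace X] [TopologicalSpace Y] (f : X → Y) : Prop :=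
  Continuous f ∧ ∀ U I : Set Y, NegligibleElem U I → NegligibleElem (f ⁻¹' U) (f ⁻¹' I)

open Pointwise

/-- The upper ramification set of a group action: points having no neighborhood
`V` with `g • V ∩ V = ∅` for all non-identity `g`. -/
def upperRamification (G : Type*) {B : Type*} [Group G] [TopologicalSpace B]
    [MulAction G B] : Set B :=
  {x : B | ¬ ∃ V : Set B, IsOpen V ∧ x ∈ V ∧ ∀ g : G, g ≠ 1 → Disjoint (g • V) V}

lemma isZDense_inter {X : Type*} [TopologicalSpace X] {U V : Set X}
    (hU : IsZDense U) (hV : IsZDense V) : IsZDense (U ∩ V) := by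
  refine ⟨hU.1.inter hV.1, fun C hC hCc => ?_⟩
  have h2 := hV.2 (U ∩ C) (hU.1.inter hC) (hU.2 C hC hCc)
  have : U ∩ V ∩ C = V ∩ (U ∩ C) := by ext x; simp; tauto
  rw [this]; exact h2

lemma isZDense_preimage_homeo {X Z : Type*} [TopologicalSpace X] [TopologicalSpace Z]
    (e : X ≃ₜ Z) {U : Set Z} (h : IsZDense U) : IsZDense (e ⁻¹' U) := by
  refine ⟨h.1.preimage e.continuous, fun C hC hCc => ?_⟩
  have h1 : IsConnected (U ∩ e '' C) :=
    h.2 _ (e.isOpenMap C hC) (hCc.image e e.continuous.continuousOn)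
  have h2 := h1.image e.symm e.symm.continuous.continuousOn
  have : e.symm '' (U ∩ e '' C) = e ⁻¹' U ∩ C := by
    ext x
    simp only [Set.mem_image, Set.mem_inter_iff, Set.mem_preimage]
    constructor
    · rintro ⟨z, ⟨hzU, w, hwC, hwz⟩, rfl⟩
      subst hwz
      simpa using ⟨hzU, hwC⟩
    · rintro ⟨hxU, hxC⟩
      exact ⟨e x, ⟨hxU, x, hxC, rfl⟩, by simp⟩
  rwa [this] at h2

lemma isOpen_smul_set' {G B : Type*} [Group G] [TopologicalSpace B] [MulAction G B]
    (hcont : ∀ g : G, Continuous fun x : B => g • x) (g : G) {V : Set B} (hV : IsOpen V) :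
    IsOpen (g • V) := by
  have : g • V = (fun x : B => g⁻¹ • x) ⁻¹' V := by
    ext x; simp [Set.mem_smul_set_iff_inv_smul_mem]
  rw [this]; exact hV.preimage (hcont g⁻¹)

lemma eq_one_of_fix_of_not_ram {G B : Type*} [Group G] [TopologicalSpace B] [MulAction G B]
    {x : B} (hx : x ∉ upperRamification G (B := B)) {g : G} (hgx : g • x = x) : g = 1 := by
  simp only [upperRamification, Set.mem_setOf_eq, not_not] at hx
  obtain ⟨V, hVo, hxV, hVd⟩ := hx
  by_contra hg
  have hd := hVd g hg
  have h1 : g • x ∈ g • V := Set.smul_mem_smul_set hxV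
  have h2 : g • x ∈ V := by rw [hgx]; exact hxV
  exact Set.disjoint_left.mp hd h1 h2

/-- If the upper ramification set is negligible and distinct points of any orbit
can be separated by open sets, then two diffuse maps `α, β` from a non-empty
connected locally connected space with `b ∘ α = b ∘ β` differ by a single group
element. -/
theorem exists_group_elt_of_quotient_eq
    {G B A : Type*} [Group G] [Finite G] [TopologicalSpace B]
    [LocallyConnectedSpace B] [TopologicalSpace A] [MulAction G B]
    (hcont : ∀ g : G, Continuous fun x : B => g • x)
    (b : B → A) (hb : Continuous b) (hopen : IsOpenMap b)
    (hsurj : Function.Surjective b)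
    (hfib : ∀ x y : B, b x = b y ↔ ∃ g : G, g • x = y)
    (hK : IsNegligible (upperRamification G (B := B)))
    (hsep : ∀ (x : B) (g : G), g • x ≠ x →
      ∃ U V : Set B, IsOpen U ∧ IsOpen V ∧ x ∈ U ∧ g • x ∈ V ∧ Disjoint U V)
    {Y : Type*} [TopologicalSpace Y] [LocallyConnectedSpace Y]
    (hY : IsConnected (Set.univ : Set Y))
    (α β : Y → B) (hα : Diffuse α) (hβ : Diffuse β)
    (hcomm : b ∘ α = b ∘ β) :
    ∃ g : G, ∀ y : Y, g • α y = β y := by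
  classical
  set K := upperRamification G (B := B) with hKdef
  have hex : ∀ y : Y, ∃ g : G, g • α y = β y := fun y =>
    (hfib (α y) (β y)).mp (congrFun hcomm y)
  -- `K` as a negligible element over `univ`
  have hKelem : NegligibleElem (Set.univ : Set B) K := by
    refine ⟨isOpen_univ, Set.subset_univ K, isOpen_univ.locallyConnectedSpace, ?_⟩
    have := isZDense_preimage_homeo (Homeomorph.Set.univ B) hK
    exact this
  -- transfer back from the subtype of `univ`
  have hpull : ∀ f : Y → B, Diffuse f → IsNegligible (f ⁻¹' K) := by
    intro f hf
    have h1 := hf.2 Set.univ K hKelem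
    rw [Set.preimage_univ] at h1
    have h2 : IsNegligible ((Subtype.val ⁻¹' (f ⁻¹' K) : Set ↥(Set.univ : Set Y))) := h1.2.2.2
    have h3 := isZDense_preimage_homeo (Homeomorph.Set.univ Y).symm h2
    have : (Homeomorph.Set.univ Y).symm ⁻¹' ((Subtype.val ⁻¹' (f ⁻¹' K) : Set ↥(Set.univ : Set Y))ᶜ)
        = (f ⁻¹' K)ᶜ := by
      ext x; simp [Homeomorph.Set.univ]
    rwa [this] at h3
  have hαK : IsNegligible (α ⁻¹' K) := hpull α hα
  have hβK : IsNegligible (β ⁻¹' K) := hpull β hβ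
  set W : Set Y := (α ⁻¹' K)ᶜ ∩ (β ⁻¹' K)ᶜ with hWdef
  have hWz : IsZDense W := isZDense_inter hαK hβK
  have hWconn : IsConnected W := by
    have := hWz.2 Set.univ isOpen_univ hY
    simpa using this
  -- uniqueness of group element on W
  have huniq : ∀ y ∈ W, ∀ g g' : G, g • α y = β y → g' • α y = β y → g = g' := by
    intro y hyW g g' hg hg'
    have hfix : (g'⁻¹ * g) • α y = α y := by
      rw [mul_smul, hg, ← hg', inv_smul_smul]
    have := eq_one_of_fix_of_not_ram hyW.1 hfix
    rwa [inv_mul_eq_one, eq_comm] at this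
  -- local constancy at unramified points
  have hloc : ∀ y : Y, α y ∉ K → ∀ g : G, g • α y = β y →
      ∃ N : Set Y, IsOpen N ∧ y ∈ N ∧ ∀ y' ∈ N, g • α y' = β y' := by
    intro y hyK g hg
    have hyK' := hyK
    simp only [hKdef, upperRamification, Set.mem_setOf_eq, not_not] at hyK'
    obtain ⟨V, hVo, hxV, hVd⟩ := hyK'
    refine ⟨α ⁻¹' V ∩ β ⁻¹' (g • V),
      (hVo.preimage hα.1).inter ((isOpen_smul_set' hcont g hVo).preimage hβ.1),
      ⟨hxV, by rw [Set.mem_preimage, ← hg]; exact Set.smul_mem_smul_set hxV⟩, ?_⟩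
    rintro y' ⟨hy'V, hy'gV⟩
    obtain ⟨h, hh⟩ := hex y'
    have hmem : (g⁻¹ * h) • α y' ∈ V := by
      rw [mul_smul, hh]
      exact Set.mem_smul_set_iff_inv_smul_mem.mp hy'gV
    by_cases hgh : g⁻¹ * h = 1
    · rw [inv_mul_eq_one] at hgh
      rw [hgh]; exact hh
    · exact absurd (Set.disjoint_left.mp (hVd _ hgh) (Set.smul_mem_smul_set hy'V) hmem)
        (fun hcon => hcon)
  obtain ⟨y₀, hy₀⟩ := hWconn.nonempty
  obtain ⟨g₀, hg₀⟩ := hex y₀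
  -- g₀ works on all of W
  have hWS : ∀ y ∈ W, g₀ • α y = β y := by
    by_contra hcon
    push_neg at hcon
    obtain ⟨y₁, hy₁W, hy₁⟩ := hcon
    obtain ⟨g₁, hg₁⟩ := hex y₁
    have hne : g₁ ≠ g₀ := fun h => hy₁ (h ▸ hg₁)
    set U : Set Y := interior {y | g₀ • α y = β y} with hUdef
    set V : Set Y := interior {y | ∃ g : G, g ≠ g₀ ∧ g • α y = β y} with hVdef
    have hsub : W ⊆ U ∪ V := by
      intro y hyW
      obtain ⟨g, hg⟩ := hex y
      obtain ⟨N, hNo, hyN, hNsub⟩ := hloc y hyW.1 g hg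
      by_cases hgg : g = g₀
      · left
        exact mem_interior.mpr ⟨N, fun z hz => hgg ▸ hNsub z hz, hNo, hyN⟩
      · right
        exact mem_interior.mpr ⟨N, fun z hz => ⟨g, hgg, hNsub z hz⟩, hNo, hyN⟩
    have h1 : (W ∩ U).Nonempty := by
      obtain ⟨N, hNo, hyN, hNsub⟩ := hloc y₀ hy₀.1 g₀ hg₀
      exact ⟨y₀, hy₀, mem_interior.mpr ⟨N, hNsub, hNo, hyN⟩⟩
    have h2 : (W ∩ V).Nonempty := by
      obtain ⟨N, hNo, hyN, hNsub⟩ := hloc y₁ hy₁W.1 g₁ hg₁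
      exact ⟨y₁, hy₁W, mem_interior.mpr ⟨N, fun z hz => ⟨g₁, hne, hNsub z hz⟩, hNo, hyN⟩⟩
    obtain ⟨z, hzW, hzU, hzV⟩ := hWconn.isPreconnected U V isOpen_interior isOpen_interior
      hsub h1 h2
    have hzU' : g₀ • α z = β z := interior_subset (s := {y | g₀ • α y = β y}) hzU
    obtain ⟨g, hgne, hgz⟩ := interior_subset (s := {y | ∃ g : G, g ≠ g₀ ∧ g • α y = β y}) hzV
    exact hgne (huniq z hzW g g₀ hgz hzU')
  -- extend to all of Y by density
  refine ⟨g₀, fun y => ?_⟩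
  by_contra hne
  obtain ⟨h, hh⟩ := hex y
  have h1 : (g₀ * h⁻¹) • β y = g₀ • α y := by
    rw [mul_smul, ← hh, inv_smul_smul]
  have h2 : (g₀ * h⁻¹) • β y ≠ β y := by rw [h1]; exact hne
  obtain ⟨U, V, hUo, hVo, hbU, hgV, hdisj⟩ := hsep (β y) (g₀ * h⁻¹) h2
  rw [h1] at hgV
  have hNo : IsOpen (β ⁻¹' U ∩ α ⁻¹' (g₀⁻¹ • V)) :=
    (hUo.preimage hβ.1).inter ((isOpen_smul_set' hcont g₀⁻¹ hVo).preimage hα.1)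
  have hyN : y ∈ β ⁻¹' U ∩ α ⁻¹' (g₀⁻¹ • V) := by
    refine ⟨hbU, ?_⟩
    rw [Set.mem_preimage, Set.mem_smul_set_iff_inv_smul_mem, inv_inv]
    exact hgV
  obtain ⟨C, hCsub, hCo, hyC, hCconn⟩ :=
    locallyConnectedSpace_iff_subsets_isOpen_isConnected.mp ‹LocallyConnectedSpace Y› y
      _ (hNo.mem_nhds hyN)
  obtain ⟨z, hzW, hzC⟩ := (hWz.2 C hCo hCconn).nonempty
  have hz := hWS z hzW
  have hzN := hCsub hzC
  have hzU : β z ∈ U := hzN.1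
  have hzV : g₀ • α z ∈ V := by
    have := hzN.2
    rw [Set.mem_preimage, Set.mem_smul_set_iff_inv_smul_mem, inv_inv] at this
    exact this
  rw [hz] at hzV
  exact Set.disjoint_left.mp hdisj hzU hzV
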